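/- Let m : ℝ → ℝ be integrable and u(x) = (G ∗ m)(x) with G(x) = e^{-|x|}/2. Then u(x) + u'(x) = e^{x} ∫_x^∞ e^{-η} m(η) dη and u(x) - u'(x) = e^{-x} ∫_{-∞}^x e^{η} m(η) dη for all x ∈ ℝ. -/

import Mathlib

open MeasureTheory Set

lemma exp_neg_sub_le (s t : ℝ) (hs : 0 ≤ s) (h : s ≤ t) :
    Real.exp (-s) - Real.exp (-t) ≤ t - s := by
  have h1 : Real.exp (-t) = Real.exp (-s) * Real.exp (s - t) := by
    rw [← Real.exp_add]; ring_nf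
  have h2 : s - t + 1 ≤ Real.exp (s - t) := Real.add_one_le_exp _
  have h3 : Real.exp (-s) ≤ 1 := Real.exp_le_one_iff.2 (by linarith)
  nlinarith [Real.exp_pos (-s)]

lemma exp_neg_lip (s t : ℝ) (hs : 0 ≤ s) (ht : 0 ≤ t) :
    |Real.exp (-s) - Real.exp (-t)| ≤ |s - t| := by
  rcases le_total s t with h | h
  · rw [abs_of_nonneg (sub_nonneg.2 (Real.exp_le_exp.2 (by linarith))),
      abs_of_nonpos (by linarith)]
    have := exp_neg_sub_le s t hs h; linarith
  · rw [abs_of_nonpos (sub_nonpos.2 (Real.exp_le_exp.2 (by linarith))),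
      abs_of_nonneg (by linarith)]
    have := exp_neg_sub_le t s ht h; linarith

/-- For `m ∈ L¹` and `u = G ∗ m`, `G(x)=e^{-|x|}/2`, one has the representation formulae
`u + u' = eˣ ∫_x^∞ e^{-η} m(η) dη` and `u - u' = e^{-x} ∫_{-∞}^x e^{η} m(η) dη`. -/
theorem convolution_representation (m : ℝ → ℝ) (hm : Integrable m)
    (u : ℝ → ℝ) (hu : ∀ x : ℝ, u x = ∫ y : ℝ, (Real.exp (-|x - y|) / 2) * m y) :
    ∀ x : ℝ,
      u x + deriv u x = Real.exp x * ∫ η in Ioi x, Real.exp (-η) * m η ∧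
      u x - deriv u x = Real.exp (-x) * ∫ η in Iio x, Real.exp η * m η := by
  intro x
  set A : ℝ := ∫ η in Iio x, Real.exp η * m η with hA
  set B : ℝ := ∫ η in Ioi x, Real.exp (-η) * m η with hB
  -- the kernel and its x-derivative at x
  set F : ℝ → ℝ → ℝ := fun z y => Real.exp (-|z - y|) / 2 * m y with hF
  set F' : ℝ → ℝ := fun y =>
    (if y < x then -(Real.exp (-|x - y|) / 2) else Real.exp (-|x - y|) / 2) * m y with hF'
  have hmeas : ∀ z : ℝ, AEStronglyMeasurable (F z) volume := fun z =>
    (((continuous_const.sub continuous_id).abs.neg.rexp.div_const 2).aestronglyMeasurable).mul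
      hm.aestronglyMeasurable
  have hFint : ∀ z : ℝ, Integrable (F z) := by
    intro z
    refine (hm.abs.mono' (hmeas z) ?_)
    filter_upwards with y
    have h1 : Real.exp (-|z - y|) ≤ 1 := Real.exp_le_one_iff.2 (neg_nonpos.2 (abs_nonneg _))
    have h2 : (0:ℝ) < Real.exp (-|z - y|) := Real.exp_pos _
    simp only [hF, Real.norm_eq_abs, abs_mul, abs_div]
    rw [abs_of_pos h2]
    calc Real.exp (-|z - y|) / |2| * |m y| ≤ 1 / 2 * |m y| := by
          rw [show |(2:ℝ)| = 2 by norm_num]; gcongr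
      _ ≤ |m y| := by nlinarith [abs_nonneg (m y)]
  have hF'meas : AEStronglyMeasurable F' volume := by
    refine AEStronglyMeasurable.mul ?_ hm.aestronglyMeasurable
    refine (Measurable.ite measurableSet_Iio ?_ ?_).aestronglyMeasurable
    · exact (((continuous_const.sub continuous_id).abs.neg.rexp.div_const 2).neg).measurable
    · exact ((continuous_const.sub continuous_id).abs.neg.rexp.div_const 2).measurable
  have h_lip : ∀ᵐ y : ℝ, LipschitzOnWith (Real.nnabs (|m y|)) (fun z => F z y)
      (Metric.ball x 1) := by
    filter_upwards with y
    refine LipschitzOnWith.mono (LipschitzWith.lipschitzOnWith ?_) (subset_univ _)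
    refine LipschitzWith.of_dist_le_mul fun a b => ?_
    simp only [hF, Real.dist_eq]
    have key : |Real.exp (-|a - y|) - Real.exp (-|b - y|)| ≤ |a - b| := by
      refine le_trans (exp_neg_lip _ _ (abs_nonneg _) (abs_nonneg _)) ?_
      have := abs_abs_sub_abs_le_abs_sub (a - y) (b - y)
      simpa [sub_sub_sub_cancel_right] using this
    have : |Real.exp (-|a - y|) / 2 * m y - Real.exp (-|b - y|) / 2 * m y|
        = |Real.exp (-|a - y|) - Real.exp (-|b - y|)| / 2 * |m y| := by
      rw [show Real.exp (-|a - y|) / 2 * m y - Real.exp (-|b - y|) / 2 * m y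
        = (Real.exp (-|a - y|) - Real.exp (-|b - y|)) * m y / 2 by ring,
        abs_div, abs_mul, abs_two]
      ring
    rw [this]
    have hc : (Real.nnabs (|m y|) : ℝ) = |m y| := by
      simp [Real.coe_nnabs]
    rw [hc]
    nlinarith [abs_nonneg (m y), abs_nonneg (a - b),
      abs_nonneg (Real.exp (-|a - y|) - Real.exp (-|b - y|))]
  have h_diff : ∀ᵐ y : ℝ, HasDerivAt (fun z => F z y) (F' y) x := by
    have hne : ∀ᵐ y : ℝ, y ≠ x := by
      refine ae_iff.2 ?_
      simpa using measure_singleton (μ := volume) x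
    filter_upwards [hne] with y hy
    rcases lt_or_gt_of_ne hy with h | h
    · -- y < x : near x, |z - y| = z - y
      have hd : HasDerivAt (fun z => Real.exp (y - z) / 2 * m y)
          (-(Real.exp (-|x - y|) / 2) * m y) x := by
        have : HasDerivAt (fun z : ℝ => y - z) (-1) x := by
          simpa using (hasDerivAt_id x).const_sub y
        have := ((this.exp).div_const 2).mul_const (m y)
        refine this.congr_deriv ?_
        rw [abs_of_pos (by linarith)]
        ring_nf
      refine hd.congr_of_eventuallyEq ?_ |>.congr_deriv (by simp [hF', h])
      · filter_upwards [Ioi_mem_nhds h] with z hz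
        rw [hF]; simp only
        rw [abs_of_pos (by simpa [sub_pos] using hz)]
        ring_nf
    · -- y > x : near x, |z - y| = y - z
      have hd : HasDerivAt (fun z => Real.exp (z - y) / 2 * m y)
          (Real.exp (-|x - y|) / 2 * m y) x := by
        have : HasDerivAt (fun z : ℝ => z - y) 1 x := (hasDerivAt_id x).sub_const y
        have := ((this.exp).div_const 2).mul_const (m y)
        refine this.congr_deriv ?_
        rw [abs_of_neg (by linarith)]
        ring_nf
      refine hd.congr_of_eventuallyEq ?_ |>.congr_deriv (by simp [hF', not_lt.2 h.le])
      · filter_upwards [Iio_mem_nhds h] with z hz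
        rw [hF]; simp only
        rw [abs_of_neg (by simpa [sub_neg] using hz)]
        ring_nf
  have key := hasDerivAt_integral_of_dominated_loc_of_lip (F := F) (F' := F') (x₀ := x)
    (bound := fun y => |m y|) (Metric.ball_mem_nhds x one_pos)
    (Filter.Eventually.of_forall hmeas) (hFint x) hF'meas h_lip hm.abs h_diff
  obtain ⟨hF'int, hder⟩ := key
  have hderiv : deriv u x = ∫ y, F' y := by
    have hu' : u = fun z => ∫ y, F z y := funext hu
    rw [hu']
    exact hder.deriv
  have husplit : u x = Real.exp (-x) / 2 * A + Real.exp x / 2 * B := by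
    rw [hu x, ← intervalIntegral.integral_Iio_add_Ici (b := x) (hFint x).integrableOn (hFint x).integrableOn]
    congr 1
    · rw [hA, ← integral_const_mul]
      refine setIntegral_congr_fun measurableSet_Iio fun y hy => ?_
      have h1 : Real.exp (-|x - y|) = Real.exp (-x) * Real.exp y := by
        rw [abs_of_pos (sub_pos.2 (mem_Iio.1 hy)), show -(x - y) = -x + y by ring, Real.exp_add]
      simp only [hF, h1]; ring
    · rw [integral_Ici_eq_integral_Ioi, hB, ← integral_const_mul]
      refine setIntegral_congr_fun measurableSet_Ioi fun y hy => ?_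
      have h1 : Real.exp (-|x - y|) = Real.exp x * Real.exp (-y) := by
        rw [abs_of_neg (sub_neg.2 (mem_Ioi.1 hy)), show -(-(x - y)) = x + -y by ring, Real.exp_add]
      simp only [hF, h1]; ring
  have hdsplit : (∫ y, F' y) = -(Real.exp (-x) / 2) * A + Real.exp x / 2 * B := by
    rw [← intervalIntegral.integral_Iio_add_Ici (b := x) hF'int.integrableOn hF'int.integrableOn]
    congr 1
    · rw [hA, ← integral_const_mul]
      refine setIntegral_congr_fun measurableSet_Iio fun y hy => ?_
      have h1 : Real.exp (-|x - y|) = Real.exp (-x) * Real.exp y := by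
        rw [abs_of_pos (sub_pos.2 (mem_Iio.1 hy)), show -(x - y) = -x + y by ring, Real.exp_add]
      simp only [hF', if_pos (mem_Iio.1 hy), h1]; ring
    · rw [integral_Ici_eq_integral_Ioi, hB, ← integral_const_mul]
      refine setIntegral_congr_fun measurableSet_Ioi fun y hy => ?_
      have h1 : Real.exp (-|x - y|) = Real.exp x * Real.exp (-y) := by
        rw [abs_of_neg (sub_neg.2 (mem_Ioi.1 hy)), show -(-(x - y)) = x + -y by ring, Real.exp_add]
      simp only [hF', if_neg (not_lt.2 (le_of_lt (mem_Ioi.1 hy))), h1]; ring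
  constructor
  · rw [husplit, hderiv, hdsplit]; ring
  · rw [husplit, hderiv, hdsplit]; ring
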